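/- Let C = (c_{ij}) be a 2×2 complex matrix; let P₁₁ (m₁×m₁), P₂₂ (m₂×m₂), P₂₁ (m₂×m₁) be complex matrices whose row sums all equal 1, and let P₁₂ = e_{m₁}·vᵀ where v ∈ ℂ^{m₂} satisfies vᵀe_{m₂} = 1. Let A be the block matrix [[c₁₁P₁₁, c₁₂P₁₂], [c₂₁P₂₁, c₂₂P₂₂]]. Then the characteristic polynomial of A factors as p_A(λ) = [(c₁₁−λ)(c₂₂−λ) − c₁₂c₂₁] · det(c₁₁P₁₁ − λI)/(c₁₁−λ) · det(c₂₂P₂₂ − λI)/(c₂₂−λ); equivalently, the multiset of eigenvalues of A equals the eigenvalues of C together with the eigenvalues of c₁₁P₁₁ other than one copy of c₁₁ and the eigenvalues of c₂₂P₂₂ other than one copy of c₂₂. -/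

import Mathlib

open Polynomial

section Stmt13Aux
open Matrix

namespace Stmt13

variable {R : Type*} [CommRing R]

/-- nilpotent part of change-of-basis matrix -/
def Nm (n : ℕ) : Matrix (Fin (n+1)) (Fin (n+1)) R :=
  Matrix.of fun i j => if j = 0 ∧ i ≠ 0 then 1 else 0

lemma Nm_mul_Nm (n : ℕ) : (Nm n : Matrix _ _ R) * Nm n = 0 := by
  ext i k
  rw [Matrix.mul_apply]
  apply Finset.sum_eq_zero
  intro j _
  by_cases h : j = 0 <;> simp [Nm, h]

def Tm (n : ℕ) : Matrix (Fin (n+1)) (Fin (n+1)) R := 1 + Nm n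
def Tm' (n : ℕ) : Matrix (Fin (n+1)) (Fin (n+1)) R := 1 - Nm n

lemma Tm_mul_Tm' (n : ℕ) : (Tm n : Matrix _ _ R) * Tm' n = 1 := by
  simp [Tm, Tm', mul_sub, add_mul, Nm_mul_Nm]

lemma Tm'_mul_Tm (n : ℕ) : (Tm' n : Matrix _ _ R) * Tm n = 1 := by
  simp [Tm, Tm', mul_add, sub_mul, Nm_mul_Nm]

lemma mul_Tm_col_zero {m n : ℕ} (Y : Matrix (Fin (m+1)) (Fin (n+1)) R) (i) :
    (Y * Tm (R := R) n : Matrix (Fin (m+1)) (Fin (n+1)) R) i 0 = ∑ k, Y i k := by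
  rw [Matrix.mul_apply]
  apply Finset.sum_congr rfl
  intro k _
  have : (Tm n : Matrix _ _ R) k 0 = 1 := by
    by_cases h : k = 0 <;> simp [Tm, Nm, Matrix.one_apply, h]
  rw [this, mul_one]

lemma Tm'_mul_apply {m n : ℕ} (B : Matrix (Fin (m+1)) (Fin (n+1)) R) (i k) :
    (Tm' (R := R) m * B : Matrix (Fin (m+1)) (Fin (n+1)) R) i k
      = B i k - (if i = 0 then 0 else B 0 k) := by
  rw [Matrix.mul_apply]
  have : ∀ j, (Tm' m : Matrix _ _ R) i j * B j k
      = (if i = j then B j k else 0) - (if j = 0 ∧ i ≠ 0 then B j k else 0) := by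
    intro j
    simp only [Tm', Nm, Matrix.sub_apply, Matrix.one_apply, Matrix.of_apply, sub_mul, ite_mul,
      one_mul, zero_mul]
  rw [Finset.sum_congr rfl fun j _ => this j, Finset.sum_sub_distrib]
  congr 1
  · simp
  · by_cases h : i = 0 <;> simp [h]

lemma colFact {m n : ℕ} (B : Matrix (Fin (m+1)) (Fin (n+1)) R) (c : R)
    (h : ∀ i, ∑ j, B i j = c) (i) :
    (Tm' (R := R) m * B * Tm (R := R) n : Matrix (Fin (m+1)) (Fin (n+1)) R) i 0 = if i = 0 then c else 0 := by
  rw [mul_Tm_col_zero]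
  have : ∀ k, (Tm' (R := R) m * B : Matrix (Fin (m+1)) (Fin (n+1)) R) i k
      = B i k - (if i = 0 then 0 else B 0 k) :=
    Tm'_mul_apply B i
  rw [Finset.sum_congr rfl fun k _ => this k, Finset.sum_sub_distrib, h]
  by_cases hi : i = 0 <;> simp [hi, h]

lemma charpoly_conj {n : Type*} [Fintype n] [DecidableEq n] (U U' A : Matrix n n R)
    (h : U * U' = 1) (h' : U' * U = 1) : (U' * A * U).charpoly = A.charpoly := by
  have key : charmatrix (U' * A * U) = U'.map C * charmatrix A * U.map C := by
    rw [charmatrix, charmatrix]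
    simp only [RingHom.mapMatrix_apply]
    rw [mul_sub, sub_mul]
    have hc : ∀ M : Matrix n n R[X], M * Matrix.scalar n X = Matrix.scalar n X * M :=
      fun M => (Matrix.scalar_commute X (Commute.all X) M).eq.symm
    congr 1
    · rw [hc, Matrix.mul_assoc, ← Matrix.map_mul, h',
        Matrix.map_one _ (map_zero _) (map_one _), Matrix.mul_one]
    · rw [← Matrix.map_mul, ← Matrix.map_mul]
  rw [Matrix.charpoly, Matrix.charpoly, key, Matrix.det_mul, Matrix.det_mul,
    mul_right_comm, ← Matrix.det_mul, ← Matrix.map_mul, h',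
    Matrix.map_one _ (map_zero _) (map_one _), Matrix.det_one, one_mul]

lemma charpoly_colZero {n : ℕ} (M : Matrix (Fin (n+1)) (Fin (n+1)) R) (c : R)
    (h : ∀ i, M i 0 = if i = 0 then c else 0) :
    M.charpoly = (X - C c) * ((charmatrix M).submatrix Fin.succ Fin.succ).det := by
  rw [Matrix.charpoly, Matrix.det_succ_column_zero, Fin.sum_univ_succ]
  have hz : ∀ i : Fin n, charmatrix M i.succ 0 = 0 := by
    intro i
    simp [charmatrix_apply_ne _ _ _ (Fin.succ_ne_zero i), h, Fin.succ_ne_zero i]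
  have h00 : M 0 0 = c := by rw [h]; simp
  simp [hz, h00, h, Fin.succAbove_zero]



def Eq2 (n₁ n₂ : ℕ) : Fin 2 ⊕ (Fin n₁ ⊕ Fin n₂) ≃ Fin (n₁+1) ⊕ Fin (n₂+1) where
  toFun x := match x with
    | .inl i => ![Sum.inl 0, Sum.inr 0] i
    | .inr (.inl x) => .inl x.succ
    | .inr (.inr x) => .inr x.succ
  invFun x := match x with
    | .inl i => Fin.cases (Sum.inl 0) (fun j => .inr (.inl j)) i
    | .inr i => Fin.cases (Sum.inl 1) (fun j => .inr (.inr j)) i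
  left_inv := by
    rintro (i | x | x)
    · match i with
      | 0 => simp
      | 1 => simp
    · simp
    · simp
  right_inv := by
    rintro (i | i) <;> induction i using Fin.cases <;> simp

@[simp] lemma Eq2_inl_zero (n₁ n₂ : ℕ) : Eq2 n₁ n₂ (.inl 0) = .inl 0 := rfl
@[simp] lemma Eq2_inl_one (n₁ n₂ : ℕ) : Eq2 n₁ n₂ (.inl 1) = .inr 0 := rfl
@[simp] lemma Eq2_inr_inl (n₁ n₂ : ℕ) (x : Fin n₁) :
    Eq2 n₁ n₂ (.inr (.inl x)) = .inl x.succ := rfl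
@[simp] lemma Eq2_inr_inr (n₁ n₂ : ℕ) (x : Fin n₂) :
    Eq2 n₁ n₂ (.inr (.inr x)) = .inr x.succ := rfl



lemma key {n₁ n₂ : ℕ} (c11 c12 c21 c22 : ℂ)
    (P11 : Matrix (Fin (n₁+1)) (Fin (n₁+1)) ℂ) (P22 : Matrix (Fin (n₂+1)) (Fin (n₂+1)) ℂ)
    (P21 : Matrix (Fin (n₂+1)) (Fin (n₁+1)) ℂ) (v : Fin (n₂+1) → ℂ)
    (h11 : ∀ i, ∑ j, P11 i j = 1) (h22 : ∀ i, ∑ j, P22 i j = 1)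
    (h21 : ∀ i, ∑ j, P21 i j = 1) (hv : ∑ j, v j = 1) :
    (fromBlocks (c11 • P11) (c12 • vecMulVec (fun _ => (1:ℂ)) v)
        (c21 • P21) (c22 • P22)).charpoly * ((X - C c11) * (X - C c22)) =
      ((X - C c11) * (X - C c22) - C c12 * C c21)
        * (c11 • P11).charpoly * (c22 • P22).charpoly := by
  set B12 : Matrix (Fin (n₁+1)) (Fin (n₂+1)) ℂ := c12 • vecMulVec (fun _ => (1:ℂ)) v with hB12
  set M11 : Matrix (Fin (n₁+1)) (Fin (n₁+1)) ℂ := Tm' (R := ℂ) n₁ * (c11 • P11) * Tm (R := ℂ) n₁ with hM11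
  set M12 : Matrix (Fin (n₁+1)) (Fin (n₂+1)) ℂ := Tm' (R := ℂ) n₁ * B12 * Tm (R := ℂ) n₂ with hM12
  set M21 : Matrix (Fin (n₂+1)) (Fin (n₁+1)) ℂ := Tm' (R := ℂ) n₂ * (c21 • P21) * Tm (R := ℂ) n₁ with hM21
  set M22 : Matrix (Fin (n₂+1)) (Fin (n₂+1)) ℂ := Tm' (R := ℂ) n₂ * (c22 • P22) * Tm (R := ℂ) n₂ with hM22
  -- row sums
  have hs11 : ∀ i, ∑ j, (c11 • P11) i j = c11 := by
    intro i; simp [← Finset.mul_sum, h11]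
  have hs21 : ∀ i, ∑ j, (c21 • P21) i j = c21 := by
    intro i; simp [← Finset.mul_sum, h21]
  have hs22 : ∀ i, ∑ j, (c22 • P22) i j = c22 := by
    intro i; simp [← Finset.mul_sum, h22]
  -- structural facts
  have hF3 : ∀ i, M11 i 0 = if i = 0 then c11 else 0 := colFact _ c11 hs11
  have hF4 : ∀ i, M21 i 0 = if i = 0 then c21 else 0 := colFact _ c21 hs21
  have hF5 : ∀ i, M22 i 0 = if i = 0 then c22 else 0 := colFact _ c22 hs22
  have hrow12 : ∀ i, i ≠ 0 → ∀ k, (Tm' (R := ℂ) n₁ * B12 : Matrix (Fin (n₁+1)) (Fin (n₂+1)) ℂ) i k = 0 := by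
    intro i hi k
    rw [Tm'_mul_apply, if_neg hi]
    simp [hB12, vecMulVec_apply]
  have hF1 : ∀ i j, i ≠ 0 → M12 i j = 0 := by
    intro i j hi
    rw [hM12, Matrix.mul_apply]
    exact Finset.sum_eq_zero fun k _ => by rw [hrow12 i hi k, zero_mul]
  have hF2 : M12 0 0 = c12 := by
    rw [hM12, mul_Tm_col_zero]
    have h0 : ∀ k, (Tm' (R := ℂ) n₁ * B12 : Matrix (Fin (n₁+1)) (Fin (n₂+1)) ℂ) 0 k = c12 * v k := by
      intro k
      rw [Tm'_mul_apply, if_pos rfl, sub_zero]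
      simp [hB12, vecMulVec_apply]
    rw [Finset.sum_congr rfl fun k _ => h0 k, ← Finset.mul_sum, hv, mul_one]
  -- conjugation
  have hconj : (fromBlocks (c11 • P11) B12 (c21 • P21) (c22 • P22)).charpoly
      = (fromBlocks M11 M12 M21 M22).charpoly := by
    have hU : (fromBlocks (Tm n₁) 0 0 (Tm n₂) : Matrix _ _ ℂ)
        * fromBlocks (Tm' n₁) 0 0 (Tm' n₂) = 1 := by
      rw [fromBlocks_multiply]
      simp [Tm_mul_Tm']
    have hU' : (fromBlocks (Tm' n₁) 0 0 (Tm' n₂) : Matrix _ _ ℂ)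
        * fromBlocks (Tm n₁) 0 0 (Tm n₂) = 1 := by
      rw [fromBlocks_multiply]
      simp [Tm'_mul_Tm]
    have := charpoly_conj (fromBlocks (Tm n₁) 0 0 (Tm n₂)) (fromBlocks (Tm' n₁) 0 0 (Tm' n₂))
      (fromBlocks (c11 • P11) B12 (c21 • P21) (c22 • P22)) hU hU'
    rw [← this]
    congr 1
    rw [fromBlocks_multiply, fromBlocks_multiply]
    simp [hM11, hM12, hM21, hM22]
  -- charpoly of the diagonal blocks
  have hP11c : (c11 • P11).charpoly
      = (X - C c11) * ((charmatrix M11).submatrix Fin.succ Fin.succ).det := by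
    rw [← charpoly_conj (Tm n₁) (Tm' n₁) (c11 • P11) (Tm_mul_Tm' n₁) (Tm'_mul_Tm n₁), ← hM11,
      charpoly_colZero M11 c11 hF3]
  have hP22c : (c22 • P22).charpoly
      = (X - C c22) * ((charmatrix M22).submatrix Fin.succ Fin.succ).det := by
    rw [← charpoly_conj (Tm n₂) (Tm' n₂) (c22 • P22) (Tm_mul_Tm' n₂) (Tm'_mul_Tm n₂), ← hM22,
      charpoly_colZero M22 c22 hF5]
  -- the big determinant
  set S : Matrix (Fin (n₁+1) ⊕ Fin (n₂+1)) (Fin (n₁+1) ⊕ Fin (n₂+1)) ℂ[X] :=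
    fromBlocks (charmatrix M11) (-(M12.map C)) (-(M21.map C)) (charmatrix M22) with hS
  have hsub : S.submatrix (Eq2 n₁ n₂) (Eq2 n₁ n₂)
      = fromBlocks !![X - C c11, -C c12; -C c21, X - C c22]
          (of fun a b => S.submatrix (Eq2 n₁ n₂) (Eq2 n₁ n₂) (.inl a) (.inr b)) 0
          (fromBlocks ((charmatrix M11).submatrix Fin.succ Fin.succ)
            0 (of fun a b => -C (M21 a.succ b.succ))
            ((charmatrix M22).submatrix Fin.succ Fin.succ)) := by
    ext x y
    rcases x with i | x | x <;> rcases y with j | y | y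
    · fin_cases i <;> fin_cases j <;>
        simp [hS, charmatrix_apply_eq, hF2, hF3, hF4, hF5]
    · rfl
    · rfl
    · fin_cases j <;>
        simp [hS, charmatrix_apply_ne, Fin.succ_ne_zero, hF1, hF3, hF4, hF5]
    · simp [hS]
    · simp [hS, hF1, Fin.succ_ne_zero]
    · fin_cases j <;>
        simp [hS, charmatrix_apply_ne, Fin.succ_ne_zero, hF1, hF4, hF5]
    · simp [hS]
    · simp [hS]
  have hdet : (fromBlocks M11 M12 M21 M22).charpoly
      = ((X - C c11) * (X - C c22) - (-C c12) * (-C c21))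
        * (((charmatrix M11).submatrix Fin.succ Fin.succ).det
          * ((charmatrix M22).submatrix Fin.succ Fin.succ).det) := by
    rw [Matrix.charpoly, charmatrix_fromBlocks, ← hS,
      ← det_submatrix_equiv_self (Eq2 n₁ n₂) S, hsub,
      det_fromBlocks_zero₂₁, det_fromBlocks_zero₁₂, det_fin_two_of]
  rw [hconj, hdet, hP11c, hP22c]
  ring

end Stmt13
end Stmt13Aux


/-- For the block matrix `A = [[c₁₁P₁₁, c₁₂ e vᵀ], [c₂₁P₂₁, c₂₂P₂₂]]` with each `Pᵢⱼ`
having all row sums `1` (and `vᵀ e = 1`), the characteristic polynomial of `A`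
factors as `charpoly(A) · (X - c₁₁)(X - c₂₂) = charpoly(C) · charpoly(c₁₁P₁₁) ·
charpoly(c₂₂P₂₂)`; i.e. the eigenvalues of `A` are those of `C` together with those
of `c₁₁P₁₁` minus one copy of `c₁₁` and those of `c₂₂P₂₂` minus one copy of `c₂₂`. -/
theorem stmt_13 {m₁ m₂ : ℕ} (Cm : Matrix (Fin 2) (Fin 2) ℂ)
    (P11 : Matrix (Fin m₁) (Fin m₁) ℂ) (P22 : Matrix (Fin m₂) (Fin m₂) ℂ)
    (P21 : Matrix (Fin m₂) (Fin m₁) ℂ) (v : Fin m₂ → ℂ)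
    (h11 : ∀ i, ∑ j, P11 i j = 1)
    (h22 : ∀ i, ∑ j, P22 i j = 1)
    (h21 : ∀ i, ∑ j, P21 i j = 1)
    (hv : ∑ j, v j = 1) :
    (Matrix.fromBlocks (Cm 0 0 • P11)
        (Cm 0 1 • Matrix.vecMulVec (fun _ => (1 : ℂ)) v)
        (Cm 1 0 • P21) (Cm 1 1 • P22)).charpoly *
      ((X - C (Cm 0 0)) * (X - C (Cm 1 1))) =
    Cm.charpoly * (Cm 0 0 • P11).charpoly * (Cm 1 1 • P22).charpoly := by
  rcases m₂ with _ | n₂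
  · exact absurd hv (by simp)
  rcases m₁ with _ | n₁
  · exact absurd (h21 0) (by simp)
  have hC : Cm.charpoly
      = (X - C (Cm 0 0)) * (X - C (Cm 1 1)) - C (Cm 0 1) * C (Cm 1 0) := by
    rw [Matrix.charpoly, Matrix.det_fin_two, Matrix.charmatrix_apply_eq,
      Matrix.charmatrix_apply_eq, Matrix.charmatrix_apply_ne _ _ _ (by decide),
      Matrix.charmatrix_apply_ne _ _ _ (by decide)]
    ring
  rw [hC]
  exact Stmt13.key (Cm 0 0) (Cm 0 1) (Cm 1 0) (Cm 1 1) P11 P22 P21 v h11 h22 h21 hv
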